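/- (Tail bound for the insulation radius.) Let d ≥ 2, 0 < β < (d−2)/(2d), and let (h(y))_{y∈ℤ^d} be a stationary family of nonnegative random variables satisfying ℙ[h(0) ≥ n] ≤ C n^{1−d} for all n ≥ 1. Define H(x) = sup{h(y) : |x − y|₁ ≤ h(y)^β}. Then limsup_{n→∞} n^{(1−β)d−1} ℙ[H(0) ≥ n] < ∞. -/

import Mathlib

open MeasureTheory Filter
open scoped ENNReal

lemma aux_floor_half {x : ℝ} (hx : 1 ≤ x) : x / 2 ≤ (⌊x⌋₊ : ℝ) := by
  rcases le_or_gt 2 x with h2 | h2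
  · have := Nat.sub_one_lt_floor x
    linarith
  · have h1 : (1 : ℝ) ≤ (⌊x⌋₊ : ℝ) := by
      exact_mod_cast Nat.one_le_cast.mpr (Nat.le_floor (by exact_mod_cast hx))
    linarith

lemma aux_bern {q : ℝ} (hq : q ≤ -1) {a : ℝ} (ha : 1 ≤ a) :
    (-q) * (a + 1) ^ (q - 1) ≤ a ^ q - (a + 1) ^ q := by
  have ha0 : 0 < a := by linarith
  have ha1 : 0 < a + 1 := by linarith
  have hia : (0:ℝ) < 1 / a := by positivity
  have hB : 1 + (-q) * (1 / a) ≤ (1 + 1 / a) ^ (-q) :=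
    one_add_mul_self_le_rpow_one_add (by linarith) (by linarith)
  have key : 1 + (-q) * (1 / (a + 1)) ≤ (1 + 1 / a) ^ (-q) := by
    refine le_trans ?_ hB
    have h3 : 1 / (a + 1) ≤ 1 / a := by
      apply div_le_div_of_nonneg_left <;> linarith
    nlinarith [h3]
  have hrw : (1 + 1 / a) ^ (-q) = (a + 1) ^ (-q) * a ^ q := by
    rw [show (1 : ℝ) + 1 / a = (a + 1) * a⁻¹ by field_simp]
    rw [Real.mul_rpow ha1.le (by positivity),
      Real.rpow_neg (by positivity : (0:ℝ) ≤ a⁻¹), Real.inv_rpow ha0.le, inv_inv]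
  rw [hrw] at key
  have hpos : (0:ℝ) < (a + 1) ^ q := Real.rpow_pos_of_pos ha1 _
  have h2 : (a + 1) ^ q * (1 + (-q) * (1 / (a + 1))) ≤ (a + 1) ^ q * ((a + 1) ^ (-q) * a ^ q) :=
    mul_le_mul_of_nonneg_left key hpos.le
  have e1 : (a + 1) ^ q * ((a + 1) ^ (-q) * a ^ q) = a ^ q := by
    rw [← mul_assoc, ← Real.rpow_add ha1, add_neg_cancel, Real.rpow_zero, one_mul]
  have e2 : (a + 1) ^ q * ((-q) * (1 / (a + 1))) = (-q) * (a + 1) ^ (q - 1) := by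
    rw [Real.rpow_sub ha1, Real.rpow_one]
    ring
  nlinarith [h2, e1, e2]

lemma aux_tail_fin {q : ℝ} (hq : q ≤ -1) {M : ℕ} (hM : 1 ≤ M) (K : ℕ) :
    (∑ m ∈ Finset.Ico (M+1) (M+1+K), ((m:ℝ)) ^ (q-1)) + (1/(-q)) * (((M+K : ℕ) : ℝ)) ^ q
      ≤ (1/(-q)) * ((M:ℝ)) ^ q := by
  have hqpos : (0:ℝ) < -q := by linarith
  induction K with
  | zero => simp
  | succ K ih =>
      rw [show M + 1 + (K + 1) = (M + 1 + K) + 1 by ring,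
        Finset.sum_Ico_succ_top (by omega)]
      have haN : 1 ≤ M + K := by omega
      have ha : (1:ℝ) ≤ ((M + K : ℕ) : ℝ) := by exact_mod_cast haN
      have hb := aux_bern hq ha
      have hcast1 : ((M + 1 + K : ℕ) : ℝ) = ((M + K : ℕ) : ℝ) + 1 := by push_cast; ring
      have hcast2 : ((M + (K + 1) : ℕ) : ℝ) = ((M + K : ℕ) : ℝ) + 1 := by push_cast; ring
      rw [hcast1, hcast2]
      have h2 : (((M + K : ℕ) : ℝ) + 1) ^ (q - 1)
          ≤ (1/(-q)) * ((((M + K : ℕ) : ℝ)) ^ q - (((M + K : ℕ) : ℝ) + 1) ^ q) := by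
        rw [one_div, ← div_eq_inv_mul, le_div_iff₀ hqpos]
        linarith [hb]
      linarith [ih, h2]

lemma aux_tail {q : ℝ} (hq : q ≤ -1) {M : ℕ} (hM : 1 ≤ M) :
    (∑' m : ℕ, (if M < m then ENNReal.ofReal ((m:ℝ) ^ (q-1)) else 0))
      ≤ ENNReal.ofReal ((1/(-q)) * ((M:ℝ)) ^ q) := by
  have hqpos : (0:ℝ) < -q := by linarith
  rw [ENNReal.tsum_eq_iSup_sum]
  refine iSup_le fun s => ?_
  set K := s.sup id + 1 with hK
  have hsub : s.filter (fun m => M < m) ⊆ Finset.Ico (M+1) (M+1+K) := by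
    intro m hm
    rw [Finset.mem_filter] at hm
    rw [Finset.mem_Ico]
    refine ⟨by omega, ?_⟩
    have : m ≤ s.sup id := Finset.le_sup (f := id) hm.1
    omega
  calc ∑ m ∈ s, (if M < m then ENNReal.ofReal ((m:ℝ) ^ (q-1)) else 0)
      = ∑ m ∈ s.filter (fun m => M < m), ENNReal.ofReal ((m:ℝ) ^ (q-1)) := by
        rw [Finset.sum_filter]
    _ ≤ ∑ m ∈ Finset.Ico (M+1) (M+1+K), ENNReal.ofReal ((m:ℝ) ^ (q-1)) :=
        Finset.sum_le_sum_of_subset hsub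
    _ = ENNReal.ofReal (∑ m ∈ Finset.Ico (M+1) (M+1+K), ((m:ℝ)) ^ (q-1)) := by
        rw [ENNReal.ofReal_sum_of_nonneg]
        intro i _
        positivity
    _ ≤ ENNReal.ofReal ((1/(-q)) * ((M:ℝ)) ^ q) := by
        apply ENNReal.ofReal_le_ofReal
        have h1 := aux_tail_fin hq hM K
        have h2 : 0 ≤ (1/(-q)) * (((M+K : ℕ):ℝ)) ^ q := by positivity
        linarith

lemma aux_count (k : ℕ) (f : ℕ → ℝ≥0∞) :
    ∑' y : Fin (k+1) → ℤ, f (∑ i, (y i).natAbs) ≤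
      ∑' m : ℕ, ((2 * (2*m+1)^k : ℕ) : ℝ≥0∞) * f m := by
  classical
  set ι : (Fin (k+1) → ℤ) → ℕ × ((Fin k → ℤ) × Bool) :=
    fun y => (∑ i, (y i).natAbs, (Fin.init y, decide (0 ≤ y (Fin.last k)))) with hι
  set g : ℕ × ((Fin k → ℤ) × Bool) → ℝ≥0∞ :=
    fun p => if ∀ i, (p.2.1 i).natAbs ≤ p.1 then f p.1 else 0 with hg
  have hinj : Function.Injective ι := by
    intro y y' hyy
    rw [hι, Prod.mk.injEq, Prod.mk.injEq] at hyy
    obtain ⟨hs, hi, hb⟩ := hyy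
    have hcs : ∀ i : Fin k, y i.castSucc = y' i.castSucc := by
      intro i
      exact congrFun hi i
    rw [Fin.sum_univ_castSucc, Fin.sum_univ_castSucc] at hs
    have hsum2 : (∑ i : Fin k, (y i.castSucc).natAbs)
        = (∑ i : Fin k, (y' i.castSucc).natAbs) := by
      exact Finset.sum_congr rfl fun i _ => by rw [hcs i]
    have hNA : (y (Fin.last k)).natAbs = (y' (Fin.last k)).natAbs := by omega
    have hsgn : (0 ≤ y (Fin.last k)) ↔ (0 ≤ y' (Fin.last k)) := decide_eq_decide.mp hb
    have hlast : y (Fin.last k) = y' (Fin.last k) := by omega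
    funext i
    refine Fin.lastCases ?_ ?_ i
    · exact hlast
    · exact hcs
  have h1 : ∀ y : Fin (k+1) → ℤ, f (∑ i, (y i).natAbs) ≤ g (ι y) := by
    intro y
    rw [hg, hι]
    simp only []
    rw [if_pos]
    intro i
    have : (y i.castSucc).natAbs ≤ ∑ j, (y j).natAbs :=
      Finset.single_le_sum (f := fun j => (y j).natAbs) (fun _ _ => Nat.zero_le _)
        (Finset.mem_univ _)
    simpa [Fin.init] using this
  have hin : ∀ m : ℕ, (∑' zb : (Fin k → ℤ) × Bool, g (m, zb))
      ≤ ((2 * (2*m+1)^k : ℕ) : ℝ≥0∞) * f m := by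
    intro m
    set s : Finset ((Fin k → ℤ) × Bool) :=
      (Fintype.piFinset fun _ : Fin k => Finset.Icc (-(m:ℤ)) m) ×ˢ Finset.univ with hs
    have hzero : ∀ zb ∉ s, g (m, zb) = 0 := by
      intro zb hzb
      rw [hg]
      simp only []
      rw [if_neg]
      intro hall
      apply hzb
      rw [hs, Finset.mem_product]
      refine ⟨?_, Finset.mem_univ _⟩
      rw [Fintype.mem_piFinset]
      intro i
      rw [Finset.mem_Icc]
      have := hall i
      omega
    rw [tsum_eq_sum hzero]
    have hcard : s.card = 2 * (2*m+1)^k := by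
      rw [hs, Finset.card_product, Fintype.card_piFinset]
      have hIcc : (Finset.Icc (-(m:ℤ)) m).card = 2*m+1 := by
        rw [Int.card_Icc]; omega
      simp [hIcc, Finset.prod_const]
      ring
    calc ∑ zb ∈ s, g (m, zb) ≤ ∑ zb ∈ s, f m := by
          apply Finset.sum_le_sum
          intro zb _
          rw [hg]
          dsimp only
          split <;> simp
      _ = (s.card : ℝ≥0∞) * f m := by rw [Finset.sum_const, nsmul_eq_mul]
      _ = _ := by rw [hcard]
  calc ∑' y : Fin (k+1) → ℤ, f (∑ i, (y i).natAbs)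
      ≤ ∑' y, g (ι y) := ENNReal.tsum_le_tsum h1
    _ ≤ ∑' p, g p := ENNReal.tsum_comp_le_tsum_of_injective hinj g
    _ = ∑' m : ℕ, ∑' zb, g (m, zb) := ENNReal.tsum_prod'
    _ ≤ _ := ENNReal.tsum_le_tsum hin

set_option maxHeartbeats 1000000 in
/-- Lemma 6 of Bramson–Zeitouni–Zerner (tail bound for the insulation radius): if
`(h(y))` is stationary, nonnegative, with `ℙ[h(0) ≥ n] ≤ C n^(1-d)`, and
`H(x) = sup{h(y) : |x-y|₁ ≤ h(y)^β}` with `0 < β < (d-2)/(2d)`, then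
`limsup_n n^((1-β)d - 1) ℙ[H(0) ≥ n] < ∞`. -/
theorem stmt10 (d : ℕ) (hd : 2 ≤ d) (β : ℝ) (hβ0 : 0 < β)
    (hβ : β < ((d : ℝ) - 2) / (2 * d))
    (Ω : Type) [MeasurableSpace Ω] (ℙ : Measure Ω) [IsProbabilityMeasure ℙ]
    (h : (Fin d → ℤ) → Ω → ℝ) (hpos : ∀ y ω, 0 ≤ h y ω)
    (hstat : ∀ (y : Fin d → ℤ) (t : ℝ), ℙ {ω | t ≤ h y ω} = ℙ {ω | t ≤ h 0 ω})
    (C : ℝ)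
    (htail : ∀ n : ℕ, 1 ≤ n →
      ℙ {ω | (n : ℝ) ≤ h 0 ω} ≤ ENNReal.ofReal (C * (n : ℝ) ^ ((1 : ℝ) - d))) :
    limsup (fun n : ℕ =>
      ENNReal.ofReal ((n : ℝ) ^ ((1 - β) * d - 1)) *
        ℙ {ω | (n : ℝ) ≤
          sSup {r : ℝ | ∃ y : Fin d → ℤ,
            r = h y ω ∧ ((∑ i, |y i| : ℤ) : ℝ) ≤ h y ω ^ β}}) atTop < ⊤ := by
  classical
  obtain ⟨k, hdk⟩ : ∃ k, d = k + 1 := ⟨d - 1, by omega⟩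
  subst hdk
  -- set up basic constants
  set D : ℝ := ((k + 1 : ℕ) : ℝ) with hDdef
  have hD2 : (2:ℝ) ≤ D := by rw [hDdef]; exact_mod_cast hd
  have hd3 : 3 ≤ k + 1 := by
    by_contra hcon
    have hd2 : k + 1 = 2 := by omega
    have hDeq : D = 2 := by rw [hDdef, hd2]; norm_num
    rw [hDeq] at hβ
    norm_num at hβ
    linarith
  have hD3 : (3:ℝ) ≤ D := by rw [hDdef]; exact_mod_cast hd3
  have hD0 : (0:ℝ) < D := by linarith
  have hβD : β * (2 * D) < D - 2 := by
    rw [div_eq_inv_mul] at hβ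
    have h2D : (0:ℝ) < 2 * D := by linarith
    calc β * (2 * D) < ((2 * D)⁻¹ * (D - 2)) * (2 * D) := by
          apply mul_lt_mul_of_pos_right hβ h2D
      _ = D - 2 := by field_simp
  set q : ℝ := D - (D - 1) / β with hqdef
  have hq1 : q ≤ -1 := by
    rw [hqdef, sub_le_iff_le_add]
    rw [div_eq_mul_inv, ← sub_nonneg]
    have hβinv : (0:ℝ) < β⁻¹ := by positivity
    have hkey : (D + 1) * β ≤ D - 1 := by nlinarith
    have : D + 1 ≤ (D - 1) * β⁻¹ := by
      rw [← mul_le_mul_iff_of_pos_right hβ0]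
      calc (D + 1) * β ≤ D - 1 := hkey
        _ = (D - 1) * β⁻¹ * β := by field_simp
    linarith
  have hβq : β * q = β * D - (D - 1) := by
    rw [hqdef]
    field_simp
  set C' : ℝ := max C 0 with hC'def
  have hC'0 : 0 ≤ C' := le_max_right _ _
  have htail' : ∀ n : ℕ, 1 ≤ n →
      ℙ {ω | (n : ℝ) ≤ h 0 ω} ≤ ENNReal.ofReal (C' * (n : ℝ) ^ ((1 : ℝ) - D)) := by
    intro n hn
    refine (htail n hn).trans (ENNReal.ofReal_le_ofReal ?_)
    have : (0:ℝ) ≤ (n : ℝ) ^ ((1 : ℝ) - D) := Real.rpow_nonneg (Nat.cast_nonneg n) _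
    exact mul_le_mul_of_nonneg_right (le_max_left _ _) this
  have hkD : ((k:ℝ)) = D - 1 := by
    rw [hDdef]
    push_cast
    ring
  -- the constants in the final bound
  set K2 : ℝ := 2 * 3^k * C' * (2:ℝ) ^ (D - 1) with hK2def
  have hK20 : 0 ≤ K2 := by positivity
  set B1 : ℝ := 6 * 5^k * C' * (2:ℝ) ^ (D - 1) with hB1def
  set B2 : ℝ := K2 * (1/(-q)) with hB2def
  have key : ∀ n : ℕ, 2 ≤ n →
      ENNReal.ofReal ((n : ℝ) ^ ((1 - β) * D - 1)) *
        ℙ {ω | (n : ℝ) ≤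
          sSup {r : ℝ | ∃ y : Fin (k+1) → ℤ,
            r = h y ω ∧ ((∑ i, |y i| : ℤ) : ℝ) ≤ h y ω ^ β}}
      ≤ ENNReal.ofReal B1 + ENNReal.ofReal B2 := by
    intro n hn2
    have hn1 : 1 ≤ n := by omega
    have hN1 : (1:ℝ) ≤ (n:ℝ) := by exact_mod_cast hn1
    have hN2 : (2:ℝ) ≤ (n:ℝ) := by exact_mod_cast hn2
    have hN0 : (0:ℝ) < (n:ℝ) := by linarith
    set t : ℕ → ℕ := fun m => max (n-1) (⌊(m:ℝ) ^ β⁻¹⌋₊) with htdef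
    have ht1 : ∀ m, 1 ≤ t m := fun m => le_trans (by omega) (le_max_left _ _)
    set f : ℕ → ℝ≥0∞ := fun m => ℙ {ω | ((t m : ℕ) : ℝ) ≤ h 0 ω} with hfdef
    set M : ℕ := ⌈(n:ℝ) ^ β⌉₊ with hMdef
    have hNβ1 : (1:ℝ) ≤ (n:ℝ) ^ β := Real.one_le_rpow hN1 hβ0.le
    have hM1 : 1 ≤ M := by
      rw [hMdef]
      exact Nat.one_le_ceil_iff.mpr (by linarith)
    have hMge : (n:ℝ) ^ β ≤ (M:ℝ) := Nat.le_ceil _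
    have hMle : (M:ℝ) ≤ 2 * (n:ℝ) ^ β := by
      have h1 : ((M:ℕ):ℝ) < (n:ℝ) ^ β + 1 := by
        rw [hMdef]
        exact Nat.ceil_lt_add_one (by positivity)
      linarith
    have hn1cast : ((n - 1 : ℕ) : ℝ) = (n:ℝ) - 1 := by
      push_cast [hn1]
      ring
    -- Step A : inclusion into the union
    have hincl : {ω | (n : ℝ) ≤
          sSup {r : ℝ | ∃ y : Fin (k+1) → ℤ,
            r = h y ω ∧ ((∑ i, |y i| : ℤ) : ℝ) ≤ h y ω ^ β}} ⊆
        ⋃ y : Fin (k+1) → ℤ, {ω | ((t (∑ i, (y i).natAbs) : ℕ) : ℝ) ≤ h y ω} := by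
      intro ω hω
      simp only [Set.mem_setOf_eq] at hω
      set S := {r : ℝ | ∃ y : Fin (k+1) → ℤ,
        r = h y ω ∧ ((∑ i, |y i| : ℤ) : ℝ) ≤ h y ω ^ β} with hSdef
      have hne : S.Nonempty := by
        refine ⟨h 0 ω, 0, rfl, ?_⟩
        simp only [Pi.zero_apply, abs_zero, Finset.sum_const_zero, Int.cast_zero]
        exact Real.rpow_nonneg (hpos 0 ω) β
      have hbdd : BddAbove S := by
        by_contra hb
        rw [Real.sSup_of_not_bddAbove hb] at hω
        linarith
      obtain ⟨r, hrS, hr⟩ := exists_lt_of_lt_csSup hne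
        (show (n:ℝ) - 1 < sSup S by linarith)
      obtain ⟨y, rfl, hcond⟩ := hrS
      refine Set.mem_iUnion.mpr ⟨y, ?_⟩
      show ((t (∑ i, (y i).natAbs) : ℕ) : ℝ) ≤ h y ω
      have hcast : (((∑ i, (y i).natAbs : ℕ) : ℕ) : ℝ) = ((∑ i, |y i| : ℤ) : ℝ) := by
        push_cast [Nat.cast_natAbs]
        rfl
      rw [htdef]
      simp only [Nat.cast_max]
      apply max_le
      · rw [hn1cast]
        linarith
      · have h1 : ((⌊(((∑ i, (y i).natAbs : ℕ)):ℝ) ^ β⁻¹⌋₊ : ℕ) : ℝ)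
            ≤ (((∑ i, (y i).natAbs : ℕ)):ℝ) ^ β⁻¹ := Nat.floor_le (by positivity)
        have h2 : (((∑ i, (y i).natAbs : ℕ)):ℝ) ^ β⁻¹ ≤ (h y ω ^ β) ^ β⁻¹ := by
          apply Real.rpow_le_rpow (by positivity) _ (by positivity)
          rw [hcast]
          exact hcond
        rw [Real.rpow_rpow_inv (hpos y ω) hβ0.ne'] at h2
        linarith
    -- Step B : union bound and stationarity
    have hUB : ℙ {ω | (n : ℝ) ≤
          sSup {r : ℝ | ∃ y : Fin (k+1) → ℤ,
            r = h y ω ∧ ((∑ i, |y i| : ℤ) : ℝ) ≤ h y ω ^ β}}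
        ≤ ∑' m : ℕ, ((2 * (2*m+1)^k : ℕ) : ℝ≥0∞) * f m := by
      calc ℙ {ω | (n : ℝ) ≤
          sSup {r : ℝ | ∃ y : Fin (k+1) → ℤ,
            r = h y ω ∧ ((∑ i, |y i| : ℤ) : ℝ) ≤ h y ω ^ β}}
          ≤ ℙ (⋃ y : Fin (k+1) → ℤ, {ω | ((t (∑ i, (y i).natAbs) : ℕ) : ℝ) ≤ h y ω}) :=
            measure_mono hincl
        _ ≤ ∑' y : Fin (k+1) → ℤ, ℙ {ω | ((t (∑ i, (y i).natAbs) : ℕ) : ℝ) ≤ h y ω} :=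
            measure_iUnion_le _
        _ = ∑' y : Fin (k+1) → ℤ, f (∑ i, (y i).natAbs) :=
            tsum_congr fun y => hstat y _
        _ ≤ _ := aux_count k f
    -- Step C : pointwise bound on the summands
    set W1 : ℝ := ((2 * (2*M+1)^k : ℕ) : ℝ) * (C' * (((n-1 : ℕ)):ℝ) ^ ((1:ℝ) - D))
      with hW1def
    have hW10 : 0 ≤ W1 := by
      rw [hW1def, hn1cast]
      have : (0:ℝ) ≤ ((n:ℝ) - 1) ^ ((1:ℝ) - D) := Real.rpow_nonneg (by linarith) _
      positivity
    have hqexp : D - 1 + β⁻¹ * (1 - D) = q - 1 := by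
      rw [hqdef]
      field_simp
      ring
    have hsplit : ∀ m : ℕ, ((2 * (2*m+1)^k : ℕ) : ℝ≥0∞) * f m ≤
        (if m ≤ M then ENNReal.ofReal W1 else 0) +
        (if M < m then ENNReal.ofReal ((K2 * (1:ℝ)) * (m:ℝ) ^ (q - 1)) else 0) := by
      intro m
      rcases le_or_gt m M with hm | hm
      · rw [if_pos hm, if_neg (not_lt.mpr hm), add_zero]
        have hf : f m ≤ ENNReal.ofReal (C' * (((n-1 : ℕ)):ℝ) ^ ((1:ℝ) - D)) := by
          have hsub2 : {ω | ((t m : ℕ) : ℝ) ≤ h 0 ω} ⊆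
              {ω | (((n-1 : ℕ)) : ℝ) ≤ h 0 ω} := by
            intro ω hω
            simp only [Set.mem_setOf_eq] at hω ⊢
            refine le_trans ?_ hω
            exact_mod_cast Nat.cast_le.mpr (le_max_left _ _)
          exact le_trans (measure_mono hsub2) (htail' (n-1) (by omega))
        have hw : ((2 * (2*m+1)^k : ℕ) : ℝ≥0∞) ≤ ((2 * (2*M+1)^k : ℕ) : ℝ≥0∞) := by
          apply Nat.cast_le.mpr
          have : (2*m+1)^k ≤ (2*M+1)^k := Nat.pow_le_pow_left (by omega) k
          omega
        calc ((2 * (2*m+1)^k : ℕ) : ℝ≥0∞) * f m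
            ≤ ((2 * (2*M+1)^k : ℕ) : ℝ≥0∞) *
              ENNReal.ofReal (C' * (((n-1 : ℕ)):ℝ) ^ ((1:ℝ) - D)) := mul_le_mul' hw hf
          _ = ENNReal.ofReal W1 := by
              rw [← ENNReal.ofReal_natCast, ← ENNReal.ofReal_mul (by positivity), hW1def]
      · rw [if_neg (by omega), if_pos hm, zero_add]
        have hm1 : 1 ≤ m := by omega
        have hm1R : (1:ℝ) ≤ (m:ℝ) := by exact_mod_cast hm1
        have hm0R : (0:ℝ) < (m:ℝ) := by linarith
        have hx1 : (1:ℝ) ≤ (m:ℝ) ^ β⁻¹ := Real.one_le_rpow hm1R (by positivity)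
        have hfloor : (m:ℝ) ^ β⁻¹ / 2 ≤ ((t m : ℕ) : ℝ) := by
          refine le_trans (aux_floor_half hx1) ?_
          exact_mod_cast Nat.cast_le.mpr (le_max_right _ _)
        have ht0 : (0:ℝ) < (m:ℝ) ^ β⁻¹ / 2 := by positivity
        have hrp : ((t m : ℕ) : ℝ) ^ ((1:ℝ) - D) ≤ ((m:ℝ) ^ β⁻¹ / 2) ^ ((1:ℝ) - D) :=
          Real.rpow_le_rpow_of_nonpos ht0 hfloor (by linarith)
        have hval : ((m:ℝ) ^ β⁻¹ / 2) ^ ((1:ℝ) - D)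
            = (m:ℝ) ^ (β⁻¹ * (1 - D)) * (2:ℝ) ^ (D - 1) := by
          rw [Real.div_rpow (by positivity) (by norm_num),
            ← Real.rpow_mul (le_of_lt hm0R),
            show (1:ℝ) - D = -(D-1) by ring,
            Real.rpow_neg (by norm_num : (0:ℝ) ≤ 2), div_eq_mul_inv, inv_inv]
        have hfm : f m ≤ ENNReal.ofReal (C' * ((t m : ℕ) : ℝ) ^ ((1:ℝ) - D)) :=
          htail' (t m) (ht1 m)
        have hwR : ((2 * (2*m+1)^k : ℕ) : ℝ) = 2 * ((2*(m:ℝ)+1)) ^ k := by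
          push_cast
          ring
        have hreal : ((2 * (2*m+1)^k : ℕ) : ℝ) * (C' * ((t m : ℕ) : ℝ) ^ ((1:ℝ) - D))
            ≤ (K2 * 1) * (m:ℝ) ^ (q - 1) := by
          have hB1 : ((t m : ℕ) : ℝ) ^ ((1:ℝ) - D)
              ≤ (m:ℝ) ^ (β⁻¹ * (1 - D)) * (2:ℝ) ^ (D - 1) := by
            rw [← hval]; exact hrp
          have hB2 : ((2*(m:ℝ)+1)) ^ k ≤ (3*(m:ℝ)) ^ k := by
            apply pow_le_pow_left₀ (by linarith) (by linarith)
          have hmono : ((2 * (2*m+1)^k : ℕ) : ℝ) * (C' * ((t m : ℕ) : ℝ) ^ ((1:ℝ) - D))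
              ≤ (2 * (3*(m:ℝ)) ^ k) * (C' * ((m:ℝ) ^ (β⁻¹ * (1 - D)) * (2:ℝ) ^ (D - 1))) := by
            rw [hwR]
            apply mul_le_mul
            · apply mul_le_mul_of_nonneg_left hB2 (by norm_num)
            · apply mul_le_mul_of_nonneg_left hB1 hC'0
            · have h9 : (0:ℝ) ≤ ((t m : ℕ) : ℝ) ^ ((1:ℝ) - D) :=
                Real.rpow_nonneg (Nat.cast_nonneg _) _
              positivity
            · positivity
          refine hmono.trans (le_of_eq ?_)
          rw [mul_pow, hK2def]
          have hmk : ((m:ℝ)) ^ k = (m:ℝ) ^ ((k:ℕ) : ℝ) := (Real.rpow_natCast _ _).symm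
          rw [hmk, hkD, ← Real.rpow_natCast (3:ℝ) k]
          rw [show ((2:ℝ) * ((3:ℝ) ^ ((k:ℕ):ℝ) * (m:ℝ) ^ (D-1))) *
              (C' * ((m:ℝ) ^ (β⁻¹ * (1 - D)) * (2:ℝ) ^ (D - 1)))
            = (2 * (3:ℝ) ^ ((k:ℕ):ℝ) * C' * (2:ℝ) ^ (D-1)) *
              ((m:ℝ) ^ (D-1) * (m:ℝ) ^ (β⁻¹ * (1 - D))) by ring]
          rw [← Real.rpow_add hm0R, hqexp, Real.rpow_natCast]
          ring
        calc ((2 * (2*m+1)^k : ℕ) : ℝ≥0∞) * f m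
            ≤ ((2 * (2*m+1)^k : ℕ) : ℝ≥0∞) *
                ENNReal.ofReal (C' * ((t m : ℕ) : ℝ) ^ ((1:ℝ) - D)) :=
              mul_le_mul_right hfm _
          _ = ENNReal.ofReal (((2 * (2*m+1)^k : ℕ) : ℝ) *
                (C' * ((t m : ℕ) : ℝ) ^ ((1:ℝ) - D))) := by
              rw [← ENNReal.ofReal_natCast, ← ENNReal.ofReal_mul (by positivity)]
          _ ≤ ENNReal.ofReal ((K2 * 1) * (m:ℝ) ^ (q - 1)) :=
              ENNReal.ofReal_le_ofReal hreal
    -- Step D : summing the two regions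
    have hsum : (∑' m : ℕ, ((2 * (2*m+1)^k : ℕ) : ℝ≥0∞) * f m)
        ≤ ENNReal.ofReal (((M+1 : ℕ) : ℝ) * W1)
          + ENNReal.ofReal (K2 * ((1/(-q)) * (M:ℝ) ^ q)) := by
      calc (∑' m : ℕ, ((2 * (2*m+1)^k : ℕ) : ℝ≥0∞) * f m)
          ≤ ∑' m : ℕ, ((if m ≤ M then ENNReal.ofReal W1 else 0) +
              (if M < m then ENNReal.ofReal ((K2 * (1:ℝ)) * (m:ℝ) ^ (q - 1)) else 0)) :=
            ENNReal.tsum_le_tsum hsplit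
        _ = (∑' m : ℕ, if m ≤ M then ENNReal.ofReal W1 else 0) +
            (∑' m : ℕ, if M < m then ENNReal.ofReal ((K2 * (1:ℝ)) * (m:ℝ) ^ (q - 1)) else 0) :=
            ENNReal.tsum_add
        _ ≤ ENNReal.ofReal (((M+1 : ℕ) : ℝ) * W1)
            + ENNReal.ofReal (K2 * ((1/(-q)) * (M:ℝ) ^ q)) := by
          apply add_le_add
          · rw [tsum_eq_sum (s := Finset.range (M+1))
              (fun m hm => if_neg (by simp at hm; omega))]
            have : ∑ m ∈ Finset.range (M+1), (if m ≤ M then ENNReal.ofReal W1 else 0)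
                = ∑ m ∈ Finset.range (M+1), ENNReal.ofReal W1 := by
              apply Finset.sum_congr rfl
              intro m hm
              rw [if_pos (by simp at hm; omega)]
            rw [this, Finset.sum_const, Finset.card_range, nsmul_eq_mul,
              ← ENNReal.ofReal_natCast, ← ENNReal.ofReal_mul (Nat.cast_nonneg _)]
          · have heq : ∀ m : ℕ, (if M < m then
                ENNReal.ofReal ((K2 * (1:ℝ)) * (m:ℝ) ^ (q - 1)) else 0)
                = ENNReal.ofReal (K2 * (1:ℝ)) *
                  (if M < m then ENNReal.ofReal ((m:ℝ) ^ (q - 1)) else 0) := by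
              intro m
              split_ifs with hc
              · rw [ENNReal.ofReal_mul (by positivity)]
              · rw [mul_zero]
            calc (∑' m : ℕ, if M < m then
                  ENNReal.ofReal ((K2 * (1:ℝ)) * (m:ℝ) ^ (q - 1)) else 0)
                = ENNReal.ofReal (K2 * (1:ℝ)) *
                  (∑' m : ℕ, if M < m then ENNReal.ofReal ((m:ℝ) ^ (q - 1)) else 0) := by
                  rw [← ENNReal.tsum_mul_left]
                  exact tsum_congr heq
              _ ≤ ENNReal.ofReal (K2 * (1:ℝ)) *
                  ENNReal.ofReal ((1/(-q)) * (M:ℝ) ^ q) :=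
                  mul_le_mul_right (aux_tail hq1 hM1) _
              _ = ENNReal.ofReal (K2 * ((1/(-q)) * (M:ℝ) ^ q)) := by
                  rw [← ENNReal.ofReal_mul (by positivity)]
                  ring_nf
    -- Step E : final real-number estimates
    have hqneg : q < 0 := by linarith
    have hNb0 : (0:ℝ) < (n:ℝ) ^ β := by positivity
    have hF1 : (n:ℝ) ^ ((1 - β) * D - 1) * (((M+1 : ℕ) : ℝ) * W1)
        ≤ B1 := by
      have hNm1pos : (0:ℝ) < (n:ℝ) - 1 := by linarith
      have hr1D : (0:ℝ) ≤ ((n:ℝ)-1) ^ ((1:ℝ)-D) := Real.rpow_nonneg (by linarith) _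
      have hcastw : ((2 * (2*M+1)^k : ℕ) : ℝ) = 2 * ((2*(M:ℝ)+1)) ^ k := by
        push_cast
        ring
      have hMp1 : ((M+1 : ℕ) : ℝ) ≤ 3 * (n:ℝ)^β := by push_cast; linarith
      have h2M : 2*(M:ℝ)+1 ≤ 5 * (n:ℝ)^β := by linarith
      have hpow : (2*(M:ℝ)+1)^k ≤ (5*(n:ℝ)^β)^k := pow_le_pow_left₀ (by positivity) h2M k
      have hW1' : W1 ≤ 2 * (5*(n:ℝ)^β)^k * (C' * ((n:ℝ)-1) ^ ((1:ℝ)-D)) := by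
        rw [hW1def, hcastw, hn1cast]
        exact mul_le_mul_of_nonneg_right (mul_le_mul_of_nonneg_left hpow (by norm_num))
          (mul_nonneg hC'0 hr1D)
      have hprod : ((M+1 : ℕ) : ℝ) * W1
          ≤ (3*(n:ℝ)^β) * (2 * (5*(n:ℝ)^β)^k * (C' * ((n:ℝ)-1) ^ ((1:ℝ)-D))) := by
        apply mul_le_mul hMp1 hW1' hW10 (by positivity)
      have hNbk : ((n:ℝ)^β) * ((n:ℝ)^β)^k = (n:ℝ) ^ (β * D) := by
        rw [← pow_succ' ((n:ℝ)^β) k, ← Real.rpow_natCast ((n:ℝ)^β) (k+1),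
          ← Real.rpow_mul hN0.le]
        try rw [hDdef]
      have s4 : (n:ℝ)^(D-1) ≤ (2*((n:ℝ)-1))^(D-1) :=
        Real.rpow_le_rpow hN0.le (by linarith) (by linarith)
      have s4b : (2*((n:ℝ)-1))^(D-1) = (2:ℝ)^(D-1) * ((n:ℝ)-1)^(D-1) :=
        Real.mul_rpow (by norm_num) (by linarith)
      have s5 : ((n:ℝ)-1)^(D-1) * ((n:ℝ)-1)^((1:ℝ)-D) = 1 := by
        rw [← Real.rpow_add hNm1pos, show (D-1)+((1:ℝ)-D) = (0:ℝ) by ring, Real.rpow_zero]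
      have s45 : (n:ℝ)^(D-1) * ((n:ℝ)-1)^((1:ℝ)-D) ≤ (2:ℝ)^(D-1) := by
        calc (n:ℝ)^(D-1) * ((n:ℝ)-1)^((1:ℝ)-D)
            ≤ ((2:ℝ)^(D-1) * ((n:ℝ)-1)^(D-1)) * ((n:ℝ)-1)^((1:ℝ)-D) :=
              mul_le_mul_of_nonneg_right (s4.trans_eq s4b) hr1D
          _ = (2:ℝ)^(D-1) * (((n:ℝ)-1)^(D-1) * ((n:ℝ)-1)^((1:ℝ)-D)) := by ring
          _ = (2:ℝ)^(D-1) := by rw [s5, mul_one]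
      calc (n:ℝ) ^ ((1 - β) * D - 1) * (((M+1 : ℕ) : ℝ) * W1)
          ≤ (n:ℝ) ^ ((1 - β) * D - 1) *
            ((3*(n:ℝ)^β) * (2 * (5*(n:ℝ)^β)^k * (C' * ((n:ℝ)-1) ^ ((1:ℝ)-D)))) :=
            mul_le_mul_of_nonneg_left hprod (Real.rpow_nonneg hN0.le _)
        _ = 6 * 5^k * C' *
            (((n:ℝ) ^ ((1 - β) * D - 1) * (n:ℝ)^(β*D)) * ((n:ℝ)-1)^((1:ℝ)-D)) := by
            rw [mul_pow (5:ℝ)]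
            rw [show (n:ℝ) ^ ((1 - β) * D - 1) *
                ((3*(n:ℝ)^β) * (2*((5:ℝ)^k * ((n:ℝ)^β)^k) * (C' * ((n:ℝ)-1)^((1:ℝ)-D))))
              = 6*(5:ℝ)^k*C' * (((n:ℝ) ^ ((1 - β) * D - 1) *
                  (((n:ℝ)^β) * ((n:ℝ)^β)^k)) * ((n:ℝ)-1)^((1:ℝ)-D)) by ring, hNbk]
            try ring
        _ = 6 * 5^k * C' * ((n:ℝ)^(D-1) * ((n:ℝ)-1)^((1:ℝ)-D)) := by
            rw [← Real.rpow_add hN0]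
            try rw [show (1-β)*D - 1 + β*D = D - 1 by ring]
        _ ≤ 6 * 5^k * C' * ((2:ℝ)^(D-1)) := by
            apply mul_le_mul_of_nonneg_left s45
            positivity
        _ = B1 := by rw [hB1def]; try ring
    have hF2 : (n:ℝ) ^ ((1 - β) * D - 1) * (K2 * ((1/(-q)) * (M:ℝ) ^ q)) ≤ B2 := by
      have hMq : (M:ℝ)^q ≤ (n:ℝ)^(β*q) := by
        rw [Real.rpow_mul hN0.le]
        exact Real.rpow_le_rpow_of_nonpos hNb0 hMge (by linarith)
      have h1mq : (0:ℝ) ≤ 1/(-q) := div_nonneg zero_le_one (by linarith)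
      have he0 : (1-β)*D - 1 + β*q = 0 := by linear_combination hβq
      calc (n:ℝ) ^ ((1 - β) * D - 1) * (K2 * ((1/(-q)) * (M:ℝ)^q))
          ≤ (n:ℝ) ^ ((1 - β) * D - 1) * (K2 * ((1/(-q)) * (n:ℝ)^(β*q))) := by
            apply mul_le_mul_of_nonneg_left _ (Real.rpow_nonneg hN0.le _)
            apply mul_le_mul_of_nonneg_left _ hK20
            exact mul_le_mul_of_nonneg_left hMq h1mq
        _ = K2 * (1/(-q)) * ((n:ℝ) ^ ((1 - β) * D - 1) * (n:ℝ)^(β*q)) := by ring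
        _ = K2 * (1/(-q)) := by
            rw [← Real.rpow_add hN0, he0, Real.rpow_zero, mul_one]
        _ = B2 := by rw [hB2def]
    calc ENNReal.ofReal ((n : ℝ) ^ ((1 - β) * D - 1)) *
        ℙ {ω | (n : ℝ) ≤
          sSup {r : ℝ | ∃ y : Fin (k+1) → ℤ,
            r = h y ω ∧ ((∑ i, |y i| : ℤ) : ℝ) ≤ h y ω ^ β}}
        ≤ ENNReal.ofReal ((n : ℝ) ^ ((1 - β) * D - 1)) *
          (ENNReal.ofReal (((M+1 : ℕ) : ℝ) * W1)
            + ENNReal.ofReal (K2 * ((1/(-q)) * (M:ℝ) ^ q))) :=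
          mul_le_mul_right (hUB.trans hsum) _
      _ = ENNReal.ofReal ((n : ℝ) ^ ((1 - β) * D - 1) * (((M+1 : ℕ) : ℝ) * W1))
          + ENNReal.ofReal ((n : ℝ) ^ ((1 - β) * D - 1) * (K2 * ((1/(-q)) * (M:ℝ) ^ q))) := by
          rw [mul_add, ← ENNReal.ofReal_mul (by positivity), ← ENNReal.ofReal_mul (by positivity)]
      _ ≤ ENNReal.ofReal B1 + ENNReal.ofReal B2 :=
          add_le_add (ENNReal.ofReal_le_ofReal hF1) (ENNReal.ofReal_le_ofReal hF2)
  have hlim : limsup (fun n : ℕ =>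
      ENNReal.ofReal ((n : ℝ) ^ ((1 - β) * D - 1)) *
        ℙ {ω | (n : ℝ) ≤
          sSup {r : ℝ | ∃ y : Fin (k+1) → ℤ,
            r = h y ω ∧ ((∑ i, |y i| : ℤ) : ℝ) ≤ h y ω ^ β}}) atTop
      ≤ ENNReal.ofReal B1 + ENNReal.ofReal B2 := by
    refine limsup_le_of_le (by isBoundedDefault) ?_
    filter_upwards [Filter.eventually_ge_atTop 2] with n hn
    exact key n hn
  refine lt_of_le_of_lt hlim ?_
  exact ENNReal.add_lt_top.mpr ⟨ENNReal.ofReal_lt_top, ENNReal.ofReal_lt_top⟩
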